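/- arXiv:1805.02057 — 4 statements merged into one kernel-verified Lean document; each statement's English description precedes it below -/
import Mathlib

section
/- For any positive root γ, the lattice I⟨≽γ⟩ = {ν ∈ Δ⁺ : ν ≽ γ} is modular; equivalently, for all η₁, η₂ ∈ I⟨≽γ⟩, ht(η₁ ∨ η₂) + ht(η₁ ∧ η₂) = ht(η₁) + ht(η₂), where ht is the height of a root. -/
open scoped RealInnerProductSpace

/-- Combinatorial data of the set of positive roots of a (reduced, irreducible,
crystallographic) root system of a simple Lie algebra, with a chosen set of
simple roots, sitting in a real inner product space `V`. -/
structure SimpleRS (V : Type*) [NormedAddCommGroup V] [InnerProductSpace ℝ V] where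
  /-- the positive roots Δ⁺ -/
  pos : Finset V
  /-- the simple roots Π -/
  simple : Finset V
  simple_sub : simple ⊆ pos
  indep : LinearIndependent ℝ (fun α : {x // x ∈ simple} => (α : V))
  root_ne : ∀ γ ∈ pos, γ ≠ (0 : V)
  /-- `coeff γ α` is the coefficient of the simple root `α` in `γ` -/
  coeff : V → V → ℕ
  coeff_spec : ∀ γ ∈ pos, γ = ∑ α ∈ simple, (coeff γ α : ℝ) • α
  /-- the reflection of a root in a root is again a root (positive or negative) -/
  reflect_mem : ∀ α ∈ pos, ∀ γ ∈ pos,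
    (γ - (2 * ⟪γ, α⟫ / ⟪α, α⟫) • α ∈ pos ∨ -(γ - (2 * ⟪γ, α⟫ / ⟪α, α⟫) • α) ∈ pos)
  crystallographic : ∀ α ∈ pos, ∀ γ ∈ pos, ∃ z : ℤ, 2 * ⟪γ, α⟫ / ⟪α, α⟫ = (z : ℝ)
  reduced : ∀ α ∈ pos, (2 : ℝ) • α ∉ pos
  /-- irreducibility: the Dynkin diagram is connected -/
  irreducible : ∀ S ⊆ simple, (∀ α ∈ S, ∀ β ∈ simple, β ∉ S → ⟪α, β⟫ = 0) →
      S = ∅ ∨ S = simple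
  /-- the highest root θ -/
  highest : V
  highest_mem : highest ∈ pos
  highest_spec : ∀ γ ∈ pos, ∃ c : V → ℕ, highest - γ = ∑ α ∈ simple, (c α : ℝ) • α

namespace SimpleRS

variable {V : Type*} [NormedAddCommGroup V] [InnerProductSpace ℝ V] (R : SimpleRS V)

/-- the root order: `μ ≼ ν` iff `ν − μ` is a nonnegative integral combination
of simple roots -/
def rle (μ ν : V) : Prop := ∃ c : V → ℕ, ν - μ = ∑ α ∈ R.simple, (c α : ℝ) • α

/-- the support of a root: simple roots occurring with nonzero coefficient -/
def supp (γ : V) : Set V := {α | α ∈ R.simple ∧ R.coeff γ α ≠ 0}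

/-- the height of a root -/
def ht (γ : V) : ℕ := ∑ α ∈ R.simple, R.coeff γ α

/-- the root system is of type `A_n`: its Dynkin diagram is a simply laced chain -/
def IsTypeA : Prop :=
  ∃ (n : ℕ) (e : Fin n ≃ {x // x ∈ R.simple}),
    (∀ i j : Fin n, ⟪(e i : V), (e j : V)⟫ ≠ 0 ↔ ((i : ℤ) - (j : ℤ)).natAbs ≤ 1) ∧
    (∀ i j : Fin n, ‖(e i : V)‖ = ‖(e j : V)‖)

/-- all roots have the same length -/
def SimplyLaced : Prop := ∀ α ∈ R.pos, ∀ β ∈ R.pos, ‖α‖ = ‖β‖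

/-- a positive root `γ` is commutative if the upper ideal it generates is abelian,
i.e. no two of its elements sum to a root -/
def IsCom (γ : V) : Prop :=
  ∀ ν₁ ∈ R.pos, ∀ ν₂ ∈ R.pos, R.rle γ ν₁ → R.rle γ ν₂ →
    ν₁ + ν₂ ∉ R.pos ∧ -(ν₁ + ν₂) ∉ R.pos

/-- the coefficientwise floor `⌊θ/2⌋` of half the highest root -/
def floorTheta : V := ∑ α ∈ R.simple, ((R.coeff R.highest α / 2 : ℕ) : ℝ) • α

end SimpleRS

namespace SimpleRS

variable {V : Type*} [NormedAddCommGroup V] [InnerProductSpace ℝ V] (R : SimpleRS V)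

/- ============ auxiliary development ============ -/

/-- real combination of simple roots -/
def rvec (f : V → ℝ) : V := ∑ α ∈ R.simple, f α • α

/-- natural combination of simple roots -/
def nv (f : V → ℕ) : V := ∑ α ∈ R.simple, (f α : ℝ) • α

lemma nv_eq_rvec (f : V → ℕ) : R.nv f = R.rvec (fun α => (f α : ℝ)) := rfl

lemma rvec_unique {f g : V → ℝ} (h : R.rvec f = R.rvec g) : ∀ α ∈ R.simple, f α = g α := by
  have h0 : ∑ a ∈ R.simple.attach, (fun a : {x // x ∈ R.simple} => f a.1 - g a.1) a • (a.1 : V) = 0 := by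
    have : ∑ a ∈ R.simple.attach, (f a.1 - g a.1) • (a.1 : V)
        = ∑ α ∈ R.simple, (f α - g α) • α :=
      Finset.sum_attach R.simple (fun α => (f α - g α) • α)
    rw [this]
    simp only [sub_smul, Finset.sum_sub_distrib]
    rw [show ∑ α ∈ R.simple, f α • α = R.rvec f from rfl,
        show ∑ α ∈ R.simple, g α • α = R.rvec g from rfl, h, sub_self]
  intro α hα
  have := linearIndependent_iff'.mp R.indep R.simple.attach
    (fun a => f a.1 - g a.1) h0 ⟨α, hα⟩ (Finset.mem_attach _ _)
  have : f α - g α = 0 := this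
  linarith

lemma pos_eq_nv {x : V} (hx : x ∈ R.pos) : x = R.nv (R.coeff x) := R.coeff_spec x hx

lemma coeff_eq_of_eq_nv {x : V} (hx : x ∈ R.pos) {f : V → ℕ} (h : x = R.nv f) :
    ∀ α ∈ R.simple, R.coeff x α = f α := by
  intro α hα
  have h1 : R.rvec (fun α => (R.coeff x α : ℝ)) = R.rvec (fun α => (f α : ℝ)) := by
    rw [← nv_eq_rvec, ← nv_eq_rvec, ← R.pos_eq_nv hx, ← h]
  exact_mod_cast R.rvec_unique h1 α hα

lemma nv_add (f g : V → ℕ) : R.nv (fun α => f α + g α) = R.nv f + R.nv g := by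
  unfold nv
  rw [← Finset.sum_add_distrib]
  exact Finset.sum_congr rfl (fun α _ => by push_cast; rw [add_smul])

lemma nv_congr {f g : V → ℕ} (h : ∀ α ∈ R.simple, f α = g α) : R.nv f = R.nv g :=
  Finset.sum_congr rfl (fun α hα => by rw [h α hα])

lemma nv_eq_zero {f : V → ℕ} (h : R.nv f = 0) : ∀ α ∈ R.simple, f α = 0 := by
  intro α hα
  have h1 : R.rvec (fun α => (f α : ℝ)) = R.rvec (fun _ => (0 : ℝ)) := by
    rw [← nv_eq_rvec, h]; unfold rvec; simp
  exact_mod_cast R.rvec_unique h1 α hα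

lemma exists_coeff_pos {x : V} (hx : x ∈ R.pos) : ∃ α ∈ R.simple, 0 < R.coeff x α := by
  by_contra hc
  push_neg at hc
  apply R.root_ne x hx
  rw [R.pos_eq_nv hx]
  unfold nv
  refine Finset.sum_eq_zero (fun α hα => ?_)
  have : R.coeff x α = 0 := Nat.le_zero.mp (hc α hα)
  simp [this]

lemma nv_ne_zero_of_ge {x : V} (hx : x ∈ R.pos) {f : V → ℕ}
    (h : ∀ α ∈ R.simple, R.coeff x α ≤ f α) : R.nv f ≠ 0 := by
  intro h0
  obtain ⟨α, hα, hpos⟩ := R.exists_coeff_pos hx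
  have := R.nv_eq_zero h0 α hα
  have := h α hα
  omega

/- rle lemmas -/

lemma rle_refl (x : V) : R.rle x x := ⟨fun _ => 0, by simp⟩

lemma rle_of_coeff_le {μ ν : V} (hμ : μ ∈ R.pos) (hν : ν ∈ R.pos)
    (h : ∀ α ∈ R.simple, R.coeff μ α ≤ R.coeff ν α) : R.rle μ ν := by
  refine ⟨fun α => R.coeff ν α - R.coeff μ α, ?_⟩
  calc ν - μ = R.nv (R.coeff ν) - R.nv (R.coeff μ) := by
        rw [← R.pos_eq_nv hν, ← R.pos_eq_nv hμ]
    _ = ∑ α ∈ R.simple, ((R.coeff ν α - R.coeff μ α : ℕ) : ℝ) • α := by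
        unfold nv
        rw [← Finset.sum_sub_distrib]
        refine Finset.sum_congr rfl (fun α hα => ?_)
        rw [← sub_smul, ← Nat.cast_sub (h α hα)]

lemma coeff_le_of_rle {μ ν : V} (hμ : μ ∈ R.pos) (hν : ν ∈ R.pos) (h : R.rle μ ν) :
    ∀ α ∈ R.simple, R.coeff μ α ≤ R.coeff ν α := by
  obtain ⟨c, hc⟩ := h
  intro α hα
  have hv : ν = R.nv (fun α => R.coeff μ α + c α) := by
    rw [nv_add]
    have h1 : R.nv c = ν - μ := hc.symm
    have h2 : R.nv (R.coeff μ) = μ := (R.pos_eq_nv hμ).symm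
    rw [h1, h2]
    abel
  have := R.coeff_eq_of_eq_nv hν hv α hα
  omega

lemma rle_trans {a b c : V} (h1 : R.rle a b) (h2 : R.rle b c) : R.rle a c := by
  obtain ⟨f, hf⟩ := h1; obtain ⟨g, hg⟩ := h2
  refine ⟨fun α => f α + g α, ?_⟩
  have h3 : c - a = (c - b) + (b - a) := by abel
  rw [h3, hf, hg, add_comm]
  exact (R.nv_add f g).symm

lemma rle_antisymm {a b : V} (h1 : R.rle a b) (h2 : R.rle b a) : a = b := by
  obtain ⟨f, hf⟩ := h1; obtain ⟨g, hg⟩ := h2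
  have hsum : R.nv (fun α => f α + g α) = 0 := by
    rw [nv_add]
    have hf' : R.nv f = b - a := hf.symm
    have hg' : R.nv g = a - b := hg.symm
    rw [hf', hg']; abel
  have hz := R.nv_eq_zero hsum
  have hba : b - a = 0 := by
    rw [show b - a = R.nv f from hf]
    exact Finset.sum_eq_zero fun α hα => by
      have h0 := hz α hα
      have : f α = 0 := by omega
      simp [this]
  exact (sub_eq_zero.mp hba).symm

/- inner product lemmas -/

lemma neg_nv_not_pos {f : V → ℕ} {x : V} (hx : x ∈ R.pos) (h : -x = R.nv f) : False := by
  have hxv := R.pos_eq_nv hx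
  have hsum : R.nv (fun α => R.coeff x α + f α) = 0 := by
    rw [nv_add, ← hxv, ← h]; abel
  obtain ⟨α, hα, hpos⟩ := R.exists_coeff_pos hx
  have := R.nv_eq_zero hsum α hα
  omega

lemma dep_coeff {μ ν : V} (hμ : μ ∈ R.pos) (hν : ν ∈ R.pos) {t : ℝ} (h : ν = t • μ) :
    ∀ α ∈ R.simple, (R.coeff ν α : ℝ) = t * R.coeff μ α := by
  have h1 : R.rvec (fun α => ((R.coeff ν α : ℕ) : ℝ)) = R.rvec (fun α => t * R.coeff μ α) := by
    have e1 : R.rvec (fun α => ((R.coeff ν α : ℕ) : ℝ)) = ν := (R.pos_eq_nv hν).symm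
    have e2 : R.rvec (fun α => t * R.coeff μ α) = t • R.nv (R.coeff μ) := by
      unfold nv rvec
      rw [Finset.smul_sum]
      exact Finset.sum_congr rfl (fun α _ => by rw [smul_smul])
    rw [← R.pos_eq_nv hμ] at e2
    rw [e1, e2, h]
  exact R.rvec_unique h1

lemma inner_self_pos' {x : V} (hx : x ≠ 0) : (0:ℝ) < ⟪x, x⟫ := by
  rw [real_inner_self_eq_norm_mul_norm]
  have : 0 < ‖x‖ := norm_pos_iff.mpr hx
  positivity

lemma cs_strict {μ ν : V} (hμ : μ ≠ 0) (hind : ∀ t : ℝ, ν ≠ t • μ) :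
    ⟪ν, μ⟫ * ⟪ν, μ⟫ < ⟪μ, μ⟫ * ⟪ν, ν⟫ := by
  have ha : (0:ℝ) < ⟪μ, μ⟫ := inner_self_pos' hμ
  set v : V := ⟪μ, μ⟫ • ν - ⟪ν, μ⟫ • μ with hv
  have hvne : v ≠ 0 := by
    intro h0
    apply hind (⟪ν, μ⟫ / ⟪μ, μ⟫)
    have h1 : ⟪μ, μ⟫ • ν = ⟪ν, μ⟫ • μ := sub_eq_zero.mp h0
    have h2 : (⟪μ, μ⟫)⁻¹ • (⟪μ, μ⟫ • ν) = (⟪μ, μ⟫)⁻¹ • (⟪ν, μ⟫ • μ) := by rw [h1]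
    rw [smul_smul, smul_smul, inv_mul_cancel₀ (ne_of_gt ha), one_smul] at h2
    rw [div_eq_inv_mul]
    exact h2
  have hvv : (0:ℝ) < ⟪v, v⟫ := inner_self_pos' hvne
  have hexp : ⟪v, v⟫ = ⟪μ,μ⟫ * ⟪μ,μ⟫ * ⟪ν,ν⟫ - ⟪μ,μ⟫ * ⟪ν,μ⟫ * ⟪ν,μ⟫ := by
    rw [hv]
    rw [inner_sub_left, inner_sub_right, inner_sub_right]
    rw [real_inner_smul_left, real_inner_smul_left, real_inner_smul_left,
        real_inner_smul_left, real_inner_smul_right, real_inner_smul_right,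
        real_inner_smul_right, real_inner_smul_right]
    rw [real_inner_comm ν μ]
    ring
  nlinarith [hvv, ha]

/-- if the inner product of two positive roots is negative, their sum is a positive root -/
lemma add_mem_of_inner_neg {μ ν : V} (hμ : μ ∈ R.pos) (hν : ν ∈ R.pos)
    (h : ⟪μ, ν⟫ < 0) : μ + ν ∈ R.pos := by
  have hμ0 : μ ≠ 0 := R.root_ne μ hμ
  have hν0 : ν ≠ 0 := R.root_ne ν hν
  have hμμ : (0:ℝ) < ⟪μ, μ⟫ := inner_self_pos' hμ0
  have hνν : (0:ℝ) < ⟪ν, ν⟫ := inner_self_pos' hν0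
  -- independence
  have hind : ∀ t : ℝ, ν ≠ t • μ := by
    intro t ht
    have htneg : t < 0 := by
      have : ⟪μ, ν⟫ = t * ⟪μ, μ⟫ := by rw [ht, real_inner_smul_right]
      nlinarith
    obtain ⟨α, hα, hpos⟩ := R.exists_coeff_pos hν
    have := R.dep_coeff hμ hν ht α hα
    have hc : (0:ℝ) < (R.coeff ν α : ℝ) := by exact_mod_cast hpos
    have hcm : (0:ℝ) ≤ (R.coeff μ α : ℝ) := Nat.cast_nonneg _
    nlinarith
  obtain ⟨z, hz⟩ := R.crystallographic μ hμ ν hν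
  obtain ⟨w, hw⟩ := R.crystallographic ν hν μ hμ
  have hz1 : z ≤ -1 := by
    have hzr : (z:ℝ) < 0 := by
      rw [← hz]
      apply div_neg_of_neg_of_pos _ hμμ
      rw [real_inner_comm]; linarith
    have : z < 0 := by exact_mod_cast hzr
    omega
  have hw1 : w ≤ -1 := by
    have hwr : (w:ℝ) < 0 := by
      rw [← hw]
      exact div_neg_of_neg_of_pos (by linarith) hνν
    have : w < 0 := by exact_mod_cast hwr
    omega
  have hcs := cs_strict hμ0 hind
  have hzw : (z:ℝ) * (w:ℝ) < 4 := by
    rw [← hz, ← hw]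
    rw [div_mul_div_comm]
    rw [div_lt_iff₀ (by positivity)]
    have h1 : ⟪ν, μ⟫ = ⟪μ, ν⟫ := real_inner_comm μ ν
    nlinarith
  have hzw' : z * w < 4 := by exact_mod_cast hzw
  have hcase : z = -1 ∨ w = -1 := by
    by_contra hc
    push_neg at hc
    have : z ≤ -2 := by omega
    have : w ≤ -2 := by omega
    nlinarith
  have hnegcase : ∀ x : V, x = μ + ν → -x ∈ R.pos → False := by
    intro x hxeq hxneg
    have hx : μ + ν = R.nv (fun α => R.coeff μ α + R.coeff ν α) := by
      rw [nv_add, ← R.pos_eq_nv hμ, ← R.pos_eq_nv hν]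
    apply R.neg_nv_not_pos hxneg
    rw [neg_neg, hxeq, hx]
  rcases hcase with hc | hc
  · have hrefl := R.reflect_mem μ hμ ν hν
    have h3 : (2 * ⟪ν, μ⟫ / ⟪μ, μ⟫) • μ = -μ := by rw [hz, hc]; norm_num
    rw [h3, sub_neg_eq_add] at hrefl
    rcases hrefl with h1 | h1
    · rw [add_comm]; exact h1
    · exact absurd h1 (fun h1 => hnegcase (ν + μ) (by abel) h1)
  · have hrefl := R.reflect_mem ν hν μ hμ
    have h3 : (2 * ⟪μ, ν⟫ / ⟪ν, ν⟫) • ν = -ν := by rw [hw, hc]; norm_num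
    rw [h3, sub_neg_eq_add] at hrefl
    rcases hrefl with h1 | h1
    · exact h1
    · exact absurd h1 (fun h1 => hnegcase (μ + ν) rfl h1)

/-- if the inner product of two distinct positive roots is positive, their difference
(one way or the other) is a positive root -/
lemma sub_mem_of_inner_pos {μ ν : V} (hμ : μ ∈ R.pos) (hν : ν ∈ R.pos)
    (hne : μ ≠ ν) (h : 0 < ⟪μ, ν⟫) : μ - ν ∈ R.pos ∨ ν - μ ∈ R.pos := by
  have hμ0 : μ ≠ 0 := R.root_ne μ hμ
  have hν0 : ν ≠ 0 := R.root_ne ν hν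
  have hμμ : (0:ℝ) < ⟪μ, μ⟫ := inner_self_pos' hμ0
  have hνν : (0:ℝ) < ⟪ν, ν⟫ := inner_self_pos' hν0
  have hcomm : ⟪ν, μ⟫ = ⟪μ, ν⟫ := real_inner_comm μ ν
  obtain ⟨z, hz⟩ := R.crystallographic μ hμ ν hν
  obtain ⟨w, hw⟩ := R.crystallographic ν hν μ hμ
  have hz1 : 1 ≤ z := by
    have hzr : (0:ℝ) < (z:ℝ) := by
      rw [← hz]; apply div_pos _ hμμ; rw [hcomm]; linarith
    have : 0 < z := by exact_mod_cast hzr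
    omega
  have hw1 : 1 ≤ w := by
    have hwr : (0:ℝ) < (w:ℝ) := by
      rw [← hw]; exact div_pos (by linarith) hνν
    have : 0 < w := by exact_mod_cast hwr
    omega
  by_cases hdep : ∃ t : ℝ, ν = t • μ
  · -- proportional roots: excluded by reducedness
    obtain ⟨t, ht⟩ := hdep
    have hνμ : ⟪ν, μ⟫ = t * ⟪μ, μ⟫ := by rw [ht, real_inner_smul_left]
    have hνν' : ⟪ν, ν⟫ = t * t * ⟪μ, μ⟫ := by
      rw [ht, real_inner_smul_left, real_inner_smul_right]; ring
    have htpos : 0 < t := by nlinarith [hcomm]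
    have hzt : (z:ℝ) = 2 * t := by
      rw [← hz, hνμ]; field_simp
    have hwt : (w:ℝ) * t = 2 := by
      have : ⟪μ, ν⟫ = t * ⟪μ, μ⟫ := by rw [← hcomm, hνμ]
      rw [← hw, this, hνν']
      field_simp
    have hzw : z * w = 4 := by
      have : (z:ℝ) * (w:ℝ) = 4 := by
        rw [hzt]
        nlinarith
      exact_mod_cast this
    have hz4 : z ≤ 4 := by nlinarith
    interval_cases z
    · -- z = 1 : t = 1/2, μ = 2ν
      exfalso
      have ht2 : t = 1/2 := by rw [show ((1:ℤ):ℝ) = 1 by norm_num] at hzt; linarith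
      apply R.reduced ν hν
      have : (2:ℝ) • ν = μ := by rw [ht, ht2, smul_smul]; norm_num
      rw [this]; exact hμ
    · -- z = 2 : t = 1, μ = ν
      exfalso
      have ht2 : t = 1 := by rw [show ((2:ℤ):ℝ) = 2 by norm_num] at hzt; linarith
      apply hne
      rw [ht, ht2, one_smul]
    · omega
    · -- z = 4 : t = 2, ν = 2μ
      exfalso
      have ht2 : t = 2 := by rw [show ((4:ℤ):ℝ) = 4 by norm_num] at hzt; linarith
      apply R.reduced μ hμ
      rw [show (2:ℝ) • μ = ν by rw [ht, ht2]]
      exact hν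
  · push_neg at hdep
    have hcs := cs_strict hμ0 hdep
    have hzw : (z:ℝ) * (w:ℝ) < 4 := by
      rw [← hz, ← hw]
      rw [div_mul_div_comm]
      rw [div_lt_iff₀ (by positivity)]
      nlinarith [hcomm]
    have hzw' : z * w < 4 := by exact_mod_cast hzw
    have hcase : z = 1 ∨ w = 1 := by
      by_contra hc
      push_neg at hc
      have : 2 ≤ z := by omega
      have : 2 ≤ w := by omega
      nlinarith
    rcases hcase with hc | hc
    · have hrefl := R.reflect_mem μ hμ ν hν
      have h3 : (2 * ⟪ν, μ⟫ / ⟪μ, μ⟫) • μ = μ := by rw [hz, hc]; norm_num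
      rw [h3] at hrefl
      rcases hrefl with h1 | h1
      · right; exact h1
      · left; rw [neg_sub] at h1; exact h1
    · have hrefl := R.reflect_mem ν hν μ hμ
      have h3 : (2 * ⟪μ, ν⟫ / ⟪ν, ν⟫) • ν = ν := by rw [hw, hc]; norm_num
      rw [h3] at hrefl
      rcases hrefl with h1 | h1
      · left; exact h1
      · right; rw [neg_sub] at h1; exact h1

attribute [local instance] Classical.propDecidable

/-- indicator coefficient function of a simple root -/
lemma nv_indicator {β : V} (hβ : β ∈ R.simple) :
    R.nv (fun α => if α = β then 1 else 0) = β := by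
  unfold nv
  rw [Finset.sum_eq_single β]
  · simp
  · intro b hb hne; simp [hne]
  · intro hb; exact absurd hβ hb

lemma simple_inner_nonpos {α β : V} (hα : α ∈ R.simple) (hβ : β ∈ R.simple)
    (hne : α ≠ β) : ⟪α, β⟫ ≤ 0 := by
  by_contra hc
  push_neg at hc
  have hαp := R.simple_sub hα
  have hβp := R.simple_sub hβ
  have key : ∀ x y : V, x ∈ R.simple → y ∈ R.simple → x ≠ y → x - y ∈ R.pos → False := by
    intro x y hx hy hxy hmem
    have h1 : x = R.nv (fun α => R.coeff (x - y) α + (if α = y then 1 else 0)) := by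
      rw [nv_add, ← R.pos_eq_nv hmem, R.nv_indicator hy]
      abel
    have h2 : x = R.nv (fun α => if α = x then 1 else 0) := (R.nv_indicator hx).symm
    have h3 := R.rvec_unique (f := fun α => ((R.coeff (x-y) α + (if α = y then 1 else 0) : ℕ) : ℝ))
      (g := fun α => (((if α = x then 1 else 0 : ℕ)) : ℝ)) (by rw [← nv_eq_rvec, ← nv_eq_rvec, ← h1, ← h2])
    have h4 := h3 y hy
    norm_num [Ne.symm hxy] at h4
    have h5 : (0:ℝ) ≤ (R.coeff (x - y) y : ℝ) := Nat.cast_nonneg _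
    linarith
  rcases R.sub_mem_of_inner_pos hαp hβp hne hc with h1 | h1
  · exact key α β hα hβ hne h1
  · exact key β α hβ hα hne.symm h1

lemma inner_nonpos_of_incomp {μ ν : V} (hμ : μ ∈ R.pos) (hν : ν ∈ R.pos)
    (h1 : ¬ R.rle μ ν) (h2 : ¬ R.rle ν μ) : ⟪μ, ν⟫ ≤ 0 := by
  by_contra hc
  push_neg at hc
  have hne : μ ≠ ν := by rintro rfl; exact h1 (R.rle_refl μ)
  rcases R.sub_mem_of_inner_pos hμ hν hne hc with hd | hd
  · exact h2 ⟨R.coeff (μ - ν), R.coeff_spec _ hd⟩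
  · exact h1 ⟨R.coeff (ν - μ), R.coeff_spec _ hd⟩

/- inner products with nv -/

lemma inner_nv_left (f : V → ℕ) (x : V) :
    ⟪R.nv f, x⟫ = ∑ α ∈ R.simple, (f α : ℝ) * ⟪α, x⟫ := by
  unfold nv
  rw [sum_inner]
  exact Finset.sum_congr rfl (fun α _ => real_inner_smul_left _ _ _)

lemma inner_nv_nv (f g : V → ℕ) :
    ⟪R.nv f, R.nv g⟫ = ∑ α ∈ R.simple, ∑ β ∈ R.simple, (f α : ℝ) * (g β : ℝ) * ⟪α, β⟫ := by
  rw [inner_nv_left]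
  refine Finset.sum_congr rfl (fun α _ => ?_)
  have : ⟪α, R.nv g⟫ = ∑ β ∈ R.simple, (g β : ℝ) * ⟪α, β⟫ := by
    unfold nv
    rw [inner_sum]
    exact Finset.sum_congr rfl (fun β _ => real_inner_smul_right _ _ _)
  rw [this, Finset.mul_sum]
  exact Finset.sum_congr rfl (fun β _ => by ring)

/-- the "disjointly supported" nonneg combinations have nonpositive inner product -/
lemma inner_nv_nv_nonpos {f g : V → ℕ} (hfg : ∀ α ∈ R.simple, f α * g α = 0) :
    ⟪R.nv f, R.nv g⟫ ≤ 0 := by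
  rw [inner_nv_nv]
  refine Finset.sum_nonpos (fun α hα => Finset.sum_nonpos (fun β hβ => ?_))
  by_cases hab : α = β
  · subst hab
    have := hfg α hα
    rcases Nat.mul_eq_zero.mp this with h0 | h0 <;> simp [h0]
  · have h1 : ⟪α, β⟫ ≤ 0 := R.simple_inner_nonpos hα hβ hab
    have h2 : (0:ℝ) ≤ (f α : ℝ) * (g β : ℝ) := by positivity
    nlinarith

lemma inner_nv_nonpos {f : V → ℕ} {x : V} (h : ∀ α ∈ R.simple, 0 < f α → ⟪α, x⟫ ≤ 0) :
    ⟪R.nv f, x⟫ ≤ 0 := by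
  rw [inner_nv_left]
  refine Finset.sum_nonpos (fun α hα => ?_)
  rcases Nat.eq_zero_or_pos (f α) with h0 | h0
  · simp [h0]
  · exact mul_nonpos_of_nonneg_of_nonpos (Nat.cast_nonneg _) (h α hα h0)

lemma inner_nv_nonneg {f : V → ℕ} {x : V} (h : ∀ α ∈ R.simple, 0 < f α → 0 ≤ ⟪α, x⟫) :
    0 ≤ ⟪R.nv f, x⟫ := by
  rw [inner_nv_left]
  refine Finset.sum_nonneg (fun α hα => ?_)
  rcases Nat.eq_zero_or_pos (f α) with h0 | h0
  · simp [h0]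
  · exact mul_nonneg (Nat.cast_nonneg _) (h α hα h0)

/-- descend move for the coefficientwise minimum -/
lemma min_move {γ μ ν : V} (hγ : γ ∈ R.pos) (hμ : μ ∈ R.pos) (hν : ν ∈ R.pos)
    (hgμ : R.rle γ μ) (hgν : R.rle γ ν) (h1 : ¬ R.rle μ ν) (h2 : ¬ R.rle ν μ) :
    (∃ β ∈ R.simple, R.coeff ν β < R.coeff μ β ∧ 0 < ⟪β, μ⟫) ∨
    (∃ β ∈ R.simple, R.coeff μ β < R.coeff ν β ∧ 0 < ⟪β, ν⟫) := by
  by_contra hcon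
  push_neg at hcon
  obtain ⟨hA, hB⟩ := hcon
  set c := R.coeff μ with hc
  set d := R.coeff ν with hd
  set P := R.nv (fun α => c α - min (c α) (d α)) with hP
  set N := R.nv (fun α => d α - min (c α) (d α)) with hN
  set q := R.nv (fun α => max (c α) (d α)) with hq
  have hgc := R.coeff_le_of_rle hγ hμ hgμ
  have hq0 : q ≠ 0 := R.nv_ne_zero_of_ge hγ (fun α hα => le_trans (hgc α hα) (le_max_left _ _))
  have hq1 : q = μ + N := by
    rw [hq, hN, R.pos_eq_nv hμ, ← hc, ← nv_add]
    exact R.nv_congr (fun α _ => by omega)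
  have hq2 : q = ν + P := by
    rw [hq, hP, R.pos_eq_nv hν, ← hd, ← nv_add]
    exact R.nv_congr (fun α _ => by omega)
  have e1 : ⟪q, q⟫ = ⟪μ, ν⟫ + ⟪μ, P⟫ + ⟪N, ν⟫ + ⟪N, P⟫ := by
    nth_rewrite 1 [hq1]
    nth_rewrite 1 [hq2]
    rw [inner_add_left, inner_add_right, inner_add_right]
    ring
  have b1 : ⟪μ, ν⟫ ≤ 0 := R.inner_nonpos_of_incomp hμ hν h1 h2
  have b2 : ⟪μ, P⟫ ≤ 0 := by
    rw [real_inner_comm, hP]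
    exact R.inner_nv_nonpos (fun α hα hpos => hA α hα (by omega))
  have b3 : ⟪N, ν⟫ ≤ 0 := by
    rw [hN]
    exact R.inner_nv_nonpos (fun α hα hpos => hB α hα (by omega))
  have b4 : ⟪N, P⟫ ≤ 0 := by
    rw [hN, hP]
    exact R.inner_nv_nv_nonpos (fun α _ => Nat.mul_eq_zero.mpr (by omega))
  have : (0:ℝ) < ⟪q, q⟫ := inner_self_pos' hq0
  linarith

/-- ascend move for the coefficientwise maximum -/
lemma max_move {γ μ ν : V} (hγ : γ ∈ R.pos) (hμ : μ ∈ R.pos) (hν : ν ∈ R.pos)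
    (hgμ : R.rle γ μ) (hgν : R.rle γ ν) (h1 : ¬ R.rle μ ν) (h2 : ¬ R.rle ν μ) :
    (∃ β ∈ R.simple, R.coeff μ β < R.coeff ν β ∧ ⟪β, μ⟫ < 0) ∨
    (∃ β ∈ R.simple, R.coeff ν β < R.coeff μ β ∧ ⟪β, ν⟫ < 0) := by
  by_contra hcon
  push_neg at hcon
  obtain ⟨hA, hB⟩ := hcon
  set c := R.coeff μ with hc
  set d := R.coeff ν with hd
  set P := R.nv (fun α => c α - min (c α) (d α)) with hP
  set N := R.nv (fun α => d α - min (c α) (d α)) with hN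
  set p := R.nv (fun α => min (c α) (d α)) with hp
  have hgc := R.coeff_le_of_rle hγ hμ hgμ
  have hgd := R.coeff_le_of_rle hγ hν hgν
  have hp0 : p ≠ 0 := R.nv_ne_zero_of_ge hγ
    (fun α hα => le_min (hgc α hα) (hgd α hα))
  have hq1 : μ = p + P := by
    rw [hp, hP, R.pos_eq_nv hμ, ← hc, ← nv_add]
    exact R.nv_congr (fun α _ => by omega)
  have hq2 : ν = p + N := by
    rw [hp, hN, R.pos_eq_nv hν, ← hd, ← nv_add]
    exact R.nv_congr (fun α _ => by omega)
  have e1 : ⟪μ, ν⟫ = ⟪p, p⟫ + ⟪p, N⟫ + ⟪P, p⟫ + ⟪P, N⟫ := by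
    nth_rewrite 1 [hq1]
    nth_rewrite 1 [hq2]
    rw [inner_add_left, inner_add_right, inner_add_right]
    ring
  have e2 : ⟪μ, N⟫ = ⟪p, N⟫ + ⟪P, N⟫ := by
    nth_rewrite 1 [hq1]
    rw [inner_add_left]
  have e3 : ⟪P, ν⟫ = ⟪P, p⟫ + ⟪P, N⟫ := by
    nth_rewrite 1 [hq2]
    rw [inner_add_right]
  have ecomm : ⟪P, p⟫ = ⟪p, P⟫ := real_inner_comm _ _
  have b1 : ⟪μ, ν⟫ ≤ 0 := R.inner_nonpos_of_incomp hμ hν h1 h2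
  have b2 : 0 ≤ ⟪μ, N⟫ := by
    rw [real_inner_comm, hN]
    exact R.inner_nv_nonneg (fun α hα hpos => hA α hα (by omega))
  have b3 : 0 ≤ ⟪P, ν⟫ := by
    rw [hP]
    exact R.inner_nv_nonneg (fun α hα hpos => hB α hα (by omega))
  have b4 : ⟪P, N⟫ ≤ 0 := by
    rw [hP, hN]
    exact R.inner_nv_nv_nonpos (fun α _ => Nat.mul_eq_zero.mpr (by omega))
  have hpp : (0:ℝ) < ⟪p, p⟫ := inner_self_pos' hp0
  linarith

lemma nv_sub {f g : V → ℕ} (h : ∀ α ∈ R.simple, g α ≤ f α) :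
    R.nv (fun α => f α - g α) = R.nv f - R.nv g := by
  unfold nv
  rw [← Finset.sum_sub_distrib]
  refine Finset.sum_congr rfl (fun α hα => ?_)
  rw [← sub_smul, ← Nat.cast_sub (h α hα)]

/-- a positive root cannot have coefficients dominated by an indicator while some other
root above `γ` has strictly smaller coefficient at `β` -/
lemma indicator_absurd {γ μ ν β : V} (hγ : γ ∈ R.pos) (hμ : μ ∈ R.pos) (hν : ν ∈ R.pos)
    (hgμ : R.rle γ μ) (hgν : R.rle γ ν) (hβ : β ∈ R.simple)
    (hlt : R.coeff ν β < R.coeff μ β)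
    (hle : ∀ α ∈ R.simple, R.coeff μ α ≤ if α = β then 1 else 0) : False := by
  have hgc := R.coeff_le_of_rle hγ hμ hgμ
  have hgd := R.coeff_le_of_rle hγ hν hgν
  apply R.root_ne γ hγ
  rw [R.pos_eq_nv hγ]
  refine Finset.sum_eq_zero (fun α hα => ?_)
  have h1 := hle α hα
  have h2 := hgc α hα
  have h3 := hgd α hα
  by_cases hab : α = β
  · subst hab
    have h4 := hle α hα
    rw [if_pos rfl] at h4
    have : R.coeff γ α = 0 := by omega
    simp [this]
  · rw [if_neg hab] at h1
    have : R.coeff γ α = 0 := by omega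
    simp [this]

/-- the descend move for the minimum: replaces `μ` by `μ - β` -/
lemma min_descend {γ μ ν β : V} (hγ : γ ∈ R.pos) (hμ : μ ∈ R.pos) (hν : ν ∈ R.pos)
    (hgμ : R.rle γ μ) (hgν : R.rle γ ν) (hβ : β ∈ R.simple)
    (hlt : R.coeff ν β < R.coeff μ β) (hip : 0 < ⟪β, μ⟫) :
    ∃ μ', μ' ∈ R.pos ∧ R.rle γ μ' ∧
      (∀ α ∈ R.simple, R.coeff μ' α = R.coeff μ α - (if α = β then 1 else 0)) := by
  have hβp := R.simple_sub hβ
  have hgc := R.coeff_le_of_rle hγ hμ hgμ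
  have hgd := R.coeff_le_of_rle hγ hν hgν
  -- μ ≠ β
  have hne : μ ≠ β := by
    intro h
    refine R.indicator_absurd hγ hμ hν hgμ hgν hβ hlt (fun α hα => ?_)
    have := R.coeff_eq_of_eq_nv hμ (by rw [h, R.nv_indicator hβ]) α hα
    omega
  have hsub : μ - β ∈ R.pos := by
    rcases R.sub_mem_of_inner_pos hβp hμ (Ne.symm hne) hip with hd | hd
    · -- β - μ ∈ pos : absurd
      exfalso
      refine R.indicator_absurd hγ hμ hν hgμ hgν hβ hlt (fun α hα => ?_)
      have h1 : β = R.nv (fun α => R.coeff (β - μ) α + R.coeff μ α) := by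
        rw [nv_add, ← R.pos_eq_nv hd, ← R.pos_eq_nv hμ]
        abel
      have h2 : β = R.nv (fun α => if α = β then 1 else 0) := (R.nv_indicator hβ).symm
      have h3 := R.rvec_unique
        (f := fun α => ((R.coeff (β - μ) α + R.coeff μ α : ℕ) : ℝ))
        (g := fun α => (((if α = β then 1 else 0 : ℕ)) : ℝ))
        (by rw [← nv_eq_rvec, ← nv_eq_rvec, ← h1, ← h2]) α hα
      have h3' : ((R.coeff (β - μ) α + R.coeff μ α : ℕ) : ℝ)
          = (((if α = β then 1 else 0 : ℕ)) : ℝ) := h3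
      have h4 : R.coeff (β - μ) α + R.coeff μ α = (if α = β then 1 else 0) := by
        exact_mod_cast h3'
      omega
    · exact hd
  have hcoeff : ∀ α ∈ R.simple, R.coeff (μ - β) α = R.coeff μ α - (if α = β then 1 else 0) := by
    refine R.coeff_eq_of_eq_nv hsub ?_
    rw [R.nv_sub (f := R.coeff μ) (g := fun α => if α = β then 1 else 0)
      (fun α hα => by
        by_cases hab : α = β
        · subst hab
          have h5 : 0 < R.coeff μ α := by omega
          simpa using (show 1 ≤ R.coeff μ α by omega)
        · simp [hab])]
    rw [← R.pos_eq_nv hμ, R.nv_indicator hβ]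
  refine ⟨μ - β, hsub, ?_, hcoeff⟩
  refine R.rle_of_coeff_le hγ hsub (fun α hα => ?_)
  rw [hcoeff α hα]
  have h2 := hgc α hα
  have h3 := hgd α hα
  by_cases hab : α = β
  · subst hab; rw [if_pos rfl]; omega
  · rw [if_neg hab]; omega

/-- the ascend move for the maximum: replaces `μ` by `μ + β` -/
lemma max_ascend {γ μ β : V} (hγ : γ ∈ R.pos) (hμ : μ ∈ R.pos)
    (hgμ : R.rle γ μ) (hβ : β ∈ R.simple) (hip : ⟪β, μ⟫ < 0) :
    ∃ μ', μ' ∈ R.pos ∧ R.rle γ μ' ∧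
      (∀ α ∈ R.simple, R.coeff μ' α = R.coeff μ α + (if α = β then 1 else 0)) := by
  have hβp := R.simple_sub hβ
  have hsum : μ + β ∈ R.pos := R.add_mem_of_inner_neg hμ hβp (by rwa [real_inner_comm])
  have hcoeff : ∀ α ∈ R.simple, R.coeff (μ + β) α = R.coeff μ α + (if α = β then 1 else 0) := by
    refine R.coeff_eq_of_eq_nv hsum ?_
    rw [nv_add, ← R.pos_eq_nv hμ, R.nv_indicator hβ]
  refine ⟨μ + β, hsum, R.rle_trans hgμ ⟨fun α => if α = β then 1 else 0, ?_⟩, hcoeff⟩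
  have h0 : μ + β - μ = β := by abel
  rw [h0]
  exact (R.nv_indicator hβ).symm

/-- the coefficientwise minimum of two roots above `γ` is a positive root -/
lemma min_root (W : ℕ) : ∀ {γ μ ν : V}, γ ∈ R.pos → μ ∈ R.pos → ν ∈ R.pos →
    R.rle γ μ → R.rle γ ν →
    (∑ α ∈ R.simple, (max (R.coeff μ α) (R.coeff ν α) - min (R.coeff μ α) (R.coeff ν α))) ≤ W →
    R.nv (fun α => min (R.coeff μ α) (R.coeff ν α)) ∈ R.pos := by
  induction W with
  | zero =>
    intro γ μ ν hγ hμ hν hgμ hgν hW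
    have h0 := Finset.sum_eq_zero_iff.mp (Nat.le_zero.mp hW)
    have e : R.nv (fun α => min (R.coeff μ α) (R.coeff ν α)) = R.nv (R.coeff μ) :=
      R.nv_congr (fun α hα => by have := h0 α hα; omega)
    rw [e, ← R.pos_eq_nv hμ]
    exact hμ
  | succ W ih =>
    intro γ μ ν hγ hμ hν hgμ hgν hW
    by_cases hc1 : R.rle μ ν
    · have hle := R.coeff_le_of_rle hμ hν hc1
      have e : R.nv (fun α => min (R.coeff μ α) (R.coeff ν α)) = R.nv (R.coeff μ) :=
        R.nv_congr (fun α hα => min_eq_left (hle α hα))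
      rw [e, ← R.pos_eq_nv hμ]
      exact hμ
    by_cases hc2 : R.rle ν μ
    · have hle := R.coeff_le_of_rle hν hμ hc2
      have e : R.nv (fun α => min (R.coeff μ α) (R.coeff ν α)) = R.nv (R.coeff ν) :=
        R.nv_congr (fun α hα => min_eq_right (hle α hα))
      rw [e, ← R.pos_eq_nv hν]
      exact hν
    rcases R.min_move hγ hμ hν hgμ hgν hc1 hc2 with ⟨β, hβ, hlt, hip⟩ | ⟨β, hβ, hlt, hip⟩
    · obtain ⟨μ', hμ', hgμ', hcoeff⟩ := R.min_descend hγ hμ hν hgμ hgν hβ hlt hip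
      have hWnew : (∑ α ∈ R.simple,
          (max (R.coeff μ' α) (R.coeff ν α) - min (R.coeff μ' α) (R.coeff ν α))) ≤ W := by
        have hlt2 : (∑ α ∈ R.simple,
            (max (R.coeff μ' α) (R.coeff ν α) - min (R.coeff μ' α) (R.coeff ν α)))
            < ∑ α ∈ R.simple,
            (max (R.coeff μ α) (R.coeff ν α) - min (R.coeff μ α) (R.coeff ν α)) := by
          refine Finset.sum_lt_sum (fun α hα => ?_) ⟨β, hβ, ?_⟩
          · have h1 := hcoeff α hα
            by_cases hab : α = β
            · subst hab; rw [if_pos rfl] at h1; omega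
            · rw [if_neg hab] at h1; omega
          · have h1 := hcoeff β hβ; rw [if_pos rfl] at h1; omega
        omega
      have hres := ih hγ hμ' hν hgμ' hgν hWnew
      have e : R.nv (fun α => min (R.coeff μ' α) (R.coeff ν α))
          = R.nv (fun α => min (R.coeff μ α) (R.coeff ν α)) := by
        refine R.nv_congr (fun α hα => ?_)
        have h1 := hcoeff α hα
        by_cases hab : α = β
        · subst hab; rw [if_pos rfl] at h1; omega
        · rw [if_neg hab] at h1; omega
      rwa [e] at hres
    · obtain ⟨ν', hν', hgν', hcoeff⟩ := R.min_descend hγ hν hμ hgν hgμ hβ hlt hip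
      have hWnew : (∑ α ∈ R.simple,
          (max (R.coeff μ α) (R.coeff ν' α) - min (R.coeff μ α) (R.coeff ν' α))) ≤ W := by
        have hlt2 : (∑ α ∈ R.simple,
            (max (R.coeff μ α) (R.coeff ν' α) - min (R.coeff μ α) (R.coeff ν' α)))
            < ∑ α ∈ R.simple,
            (max (R.coeff μ α) (R.coeff ν α) - min (R.coeff μ α) (R.coeff ν α)) := by
          refine Finset.sum_lt_sum (fun α hα => ?_) ⟨β, hβ, ?_⟩
          · have h1 := hcoeff α hα
            by_cases hab : α = β
            · subst hab; rw [if_pos rfl] at h1; omega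
            · rw [if_neg hab] at h1; omega
          · have h1 := hcoeff β hβ; rw [if_pos rfl] at h1; omega
        omega
      have hres := ih hγ hμ hν' hgμ hgν' hWnew
      have e : R.nv (fun α => min (R.coeff μ α) (R.coeff ν' α))
          = R.nv (fun α => min (R.coeff μ α) (R.coeff ν α)) := by
        refine R.nv_congr (fun α hα => ?_)
        have h1 := hcoeff α hα
        by_cases hab : α = β
        · subst hab; rw [if_pos rfl] at h1; omega
        · rw [if_neg hab] at h1; omega
      rwa [e] at hres

/-- the coefficientwise maximum of two roots above `γ` is a positive root -/
lemma max_root (W : ℕ) : ∀ {γ μ ν : V}, γ ∈ R.pos → μ ∈ R.pos → ν ∈ R.pos →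
    R.rle γ μ → R.rle γ ν →
    (∑ α ∈ R.simple, (max (R.coeff μ α) (R.coeff ν α) - min (R.coeff μ α) (R.coeff ν α))) ≤ W →
    R.nv (fun α => max (R.coeff μ α) (R.coeff ν α)) ∈ R.pos := by
  induction W with
  | zero =>
    intro γ μ ν hγ hμ hν hgμ hgν hW
    have h0 := Finset.sum_eq_zero_iff.mp (Nat.le_zero.mp hW)
    have e : R.nv (fun α => max (R.coeff μ α) (R.coeff ν α)) = R.nv (R.coeff μ) :=
      R.nv_congr (fun α hα => by have := h0 α hα; omega)
    rw [e, ← R.pos_eq_nv hμ]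
    exact hμ
  | succ W ih =>
    intro γ μ ν hγ hμ hν hgμ hgν hW
    by_cases hc1 : R.rle μ ν
    · have hle := R.coeff_le_of_rle hμ hν hc1
      have e : R.nv (fun α => max (R.coeff μ α) (R.coeff ν α)) = R.nv (R.coeff ν) :=
        R.nv_congr (fun α hα => max_eq_right (hle α hα))
      rw [e, ← R.pos_eq_nv hν]
      exact hν
    by_cases hc2 : R.rle ν μ
    · have hle := R.coeff_le_of_rle hν hμ hc2
      have e : R.nv (fun α => max (R.coeff μ α) (R.coeff ν α)) = R.nv (R.coeff μ) :=
        R.nv_congr (fun α hα => max_eq_left (hle α hα))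
      rw [e, ← R.pos_eq_nv hμ]
      exact hμ
    rcases R.max_move hγ hμ hν hgμ hgν hc1 hc2 with ⟨β, hβ, hlt, hip⟩ | ⟨β, hβ, hlt, hip⟩
    · obtain ⟨μ', hμ', hgμ', hcoeff⟩ := R.max_ascend hγ hμ hgμ hβ hip
      have hWnew : (∑ α ∈ R.simple,
          (max (R.coeff μ' α) (R.coeff ν α) - min (R.coeff μ' α) (R.coeff ν α))) ≤ W := by
        have hlt2 : (∑ α ∈ R.simple,
            (max (R.coeff μ' α) (R.coeff ν α) - min (R.coeff μ' α) (R.coeff ν α)))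
            < ∑ α ∈ R.simple,
            (max (R.coeff μ α) (R.coeff ν α) - min (R.coeff μ α) (R.coeff ν α)) := by
          refine Finset.sum_lt_sum (fun α hα => ?_) ⟨β, hβ, ?_⟩
          · have h1 := hcoeff α hα
            by_cases hab : α = β
            · subst hab; rw [if_pos rfl] at h1; omega
            · rw [if_neg hab] at h1; omega
          · have h1 := hcoeff β hβ; rw [if_pos rfl] at h1; omega
        omega
      have hres := ih hγ hμ' hν hgμ' hgν hWnew
      have e : R.nv (fun α => max (R.coeff μ' α) (R.coeff ν α))
          = R.nv (fun α => max (R.coeff μ α) (R.coeff ν α)) := by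
        refine R.nv_congr (fun α hα => ?_)
        have h1 := hcoeff α hα
        by_cases hab : α = β
        · subst hab; rw [if_pos rfl] at h1; omega
        · rw [if_neg hab] at h1; omega
      rwa [e] at hres
    · obtain ⟨ν', hν', hgν', hcoeff⟩ := R.max_ascend hγ hν hgν hβ hip
      have hWnew : (∑ α ∈ R.simple,
          (max (R.coeff μ α) (R.coeff ν' α) - min (R.coeff μ α) (R.coeff ν' α))) ≤ W := by
        have hlt2 : (∑ α ∈ R.simple,
            (max (R.coeff μ α) (R.coeff ν' α) - min (R.coeff μ α) (R.coeff ν' α)))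
            < ∑ α ∈ R.simple,
            (max (R.coeff μ α) (R.coeff ν α) - min (R.coeff μ α) (R.coeff ν α)) := by
          refine Finset.sum_lt_sum (fun α hα => ?_) ⟨β, hβ, ?_⟩
          · have h1 := hcoeff α hα
            by_cases hab : α = β
            · subst hab; rw [if_pos rfl] at h1; omega
            · rw [if_neg hab] at h1; omega
          · have h1 := hcoeff β hβ; rw [if_pos rfl] at h1; omega
        omega
      have hres := ih hγ hμ hν' hgμ hgν' hWnew
      have e : R.nv (fun α => max (R.coeff μ α) (R.coeff ν' α))
          = R.nv (fun α => max (R.coeff μ α) (R.coeff ν α)) := by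
        refine R.nv_congr (fun α hα => ?_)
        have h1 := hcoeff α hα
        by_cases hab : α = β
        · subst hab; rw [if_pos rfl] at h1; omega
        · rw [if_neg hab] at h1; omega
      rwa [e] at hres

end SimpleRS


/-- the lattice `I⟨≽γ⟩` is modular: for all `η₁, η₂ ∈ I⟨≽γ⟩`, if `s`
is their join and `m` their meet inside `I⟨≽γ⟩`, then
`ht(s) + ht(m) = ht(η₁) + ht(η₂)`. -/
theorem stmt5 {V : Type*} [NormedAddCommGroup V] [InnerProductSpace ℝ V]
    (R : SimpleRS V) {γ : V} (hγ : γ ∈ R.pos)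
    {η₁ η₂ : V} (h1 : η₁ ∈ R.pos) (h2 : η₂ ∈ R.pos)
    (hg1 : R.rle γ η₁) (hg2 : R.rle γ η₂)
    {s : V} (hs : (s ∈ R.pos ∧ R.rle γ s) ∧ R.rle η₁ s ∧ R.rle η₂ s ∧
        ∀ t, (t ∈ R.pos ∧ R.rle γ t) → R.rle η₁ t → R.rle η₂ t → R.rle s t)
    {m : V} (hm : (m ∈ R.pos ∧ R.rle γ m) ∧ R.rle m η₁ ∧ R.rle m η₂ ∧
        ∀ t, (t ∈ R.pos ∧ R.rle γ t) → R.rle t η₁ → R.rle t η₂ → R.rle t m) :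
    R.ht s + R.ht m = R.ht η₁ + R.ht η₂ := by
  obtain ⟨⟨hsp, hgs⟩, hs1, hs2, hsmin⟩ := hs
  obtain ⟨⟨hmp, hgm⟩, hm1, hm2, hmmax⟩ := hm
  have hq : R.nv (fun α => max (R.coeff η₁ α) (R.coeff η₂ α)) ∈ R.pos :=
    R.max_root _ hγ h1 h2 hg1 hg2 le_rfl
  have hp : R.nv (fun α => min (R.coeff η₁ α) (R.coeff η₂ α)) ∈ R.pos :=
    R.min_root _ hγ h1 h2 hg1 hg2 le_rfl
  set q := R.nv (fun α => max (R.coeff η₁ α) (R.coeff η₂ α)) with hqdef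
  set p := R.nv (fun α => min (R.coeff η₁ α) (R.coeff η₂ α)) with hpdef
  have hqc : ∀ α ∈ R.simple, R.coeff q α = max (R.coeff η₁ α) (R.coeff η₂ α) :=
    R.coeff_eq_of_eq_nv hq rfl
  have hpc : ∀ α ∈ R.simple, R.coeff p α = min (R.coeff η₁ α) (R.coeff η₂ α) :=
    R.coeff_eq_of_eq_nv hp rfl
  have hgc := R.coeff_le_of_rle hγ h1 hg1
  have hgd := R.coeff_le_of_rle hγ h2 hg2
  have hgq : R.rle γ q := R.rle_of_coeff_le hγ hq (fun α hα => by
    rw [hqc α hα]; exact le_trans (hgc α hα) (le_max_left _ _))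
  have h1q : R.rle η₁ q := R.rle_of_coeff_le h1 hq (fun α hα => by
    rw [hqc α hα]; exact le_max_left _ _)
  have h2q : R.rle η₂ q := R.rle_of_coeff_le h2 hq (fun α hα => by
    rw [hqc α hα]; exact le_max_right _ _)
  have hgp : R.rle γ p := R.rle_of_coeff_le hγ hp (fun α hα => by
    rw [hpc α hα]; exact le_min (hgc α hα) (hgd α hα))
  have hp1 : R.rle p η₁ := R.rle_of_coeff_le hp h1 (fun α hα => by
    rw [hpc α hα]; exact min_le_left _ _)
  have hp2 : R.rle p η₂ := R.rle_of_coeff_le hp h2 (fun α hα => by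
    rw [hpc α hα]; exact min_le_right _ _)
  have hsq : R.rle s q := hsmin q ⟨hq, hgq⟩ h1q h2q
  have hqs : R.rle q s := by
    have hc1 := R.coeff_le_of_rle h1 hsp hs1
    have hc2 := R.coeff_le_of_rle h2 hsp hs2
    exact R.rle_of_coeff_le hq hsp (fun α hα => by
      rw [hqc α hα]; exact max_le (hc1 α hα) (hc2 α hα))
  have hpm : R.rle p m := hmmax p ⟨hp, hgp⟩ hp1 hp2
  have hmp' : R.rle m p := by
    have hc1 := R.coeff_le_of_rle hmp h1 hm1
    have hc2 := R.coeff_le_of_rle hmp h2 hm2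
    exact R.rle_of_coeff_le hmp hp (fun α hα => by
      rw [hpc α hα]; exact le_min (hc1 α hα) (hc2 α hα))
  have hseq : s = q := R.rle_antisymm hsq hqs
  have hmeq : m = p := R.rle_antisymm hmp' hpm
  rw [hseq, hmeq]
  show (∑ α ∈ R.simple, R.coeff q α) + (∑ α ∈ R.simple, R.coeff p α)
      = (∑ α ∈ R.simple, R.coeff η₁ α) + (∑ α ∈ R.simple, R.coeff η₂ α)
  rw [← Finset.sum_add_distrib, ← Finset.sum_add_distrib]
  refine Finset.sum_congr rfl (fun α hα => ?_)
  rw [hqc α hα, hpc α hα]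
  omega
end

section
/- Call a positive root γ commutative if the upper ideal I⟨≽γ⟩ = {ν ∈ Δ⁺ : ν ≽ γ} is abelian, i.e., no two elements of it sum to a root. Let Δ be not of type A_n. If γ is non-commutative, then γ ≼ ⌊θ/2⌋ (coefficientwise: ht_α(γ) ≤ ⌊ht_α(θ)/2⌋ for every simple root α). -/
open scoped RealInnerProductSpace

private lemma coeff_eq_of_sum_eq {V : Type*} [NormedAddCommGroup V] [InnerProductSpace ℝ V]
    (R : SimpleRS V) (f g : V → ℝ)
    (h : ∑ α ∈ R.simple, f α • α = ∑ α ∈ R.simple, g α • α) :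
    ∀ α ∈ R.simple, f α = g α := by
  have h2 : ∑ α ∈ R.simple.attach, (f (α : V) - g (α : V)) • (α : V) = 0 := by
    simp only [sub_smul, Finset.sum_sub_distrib]
    rw [Finset.sum_attach R.simple (fun α => f α • α),
      Finset.sum_attach R.simple (fun α => g α • α), h, sub_self]
  intro α hα
  have h3 : f α - g α = 0 := linearIndependent_iff'.mp R.indep R.simple.attach
      (fun β => f (β : V) - g (β : V)) h2 ⟨α, hα⟩ (Finset.mem_attach _ _)
  linarith

/-- if `Δ` is not of type `A_n` and `γ` is a non-commutative
positive root, then `γ ≼ ⌊θ/2⌋`, i.e. `ht_α(γ) ≤ ⌊ht_α(θ)/2⌋` for every simple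
root `α`. -/
theorem stmt10 {V : Type*} [NormedAddCommGroup V] [InnerProductSpace ℝ V]
    (R : SimpleRS V) (hA : ¬ R.IsTypeA) {γ : V} (hγ : γ ∈ R.pos)
    (hnc : ¬ R.IsCom γ) :
    ∀ α ∈ R.simple, R.coeff γ α ≤ R.coeff R.highest α / 2 := by
  rw [SimpleRS.IsCom] at hnc
  push_neg at hnc
  obtain ⟨ν₁, hν₁, ν₂, hν₂, hr₁, hr₂, hsum⟩ := hnc
  obtain ⟨c₁, hc₁⟩ := hr₁
  obtain ⟨c₂, hc₂⟩ := hr₂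
  have hγspec := R.coeff_spec γ hγ
  -- ν₁ + ν₂ = ∑ (2*coeff γ α + c₁ α + c₂ α) • α
  have key2 : ν₁ + ν₂ = ∑ α ∈ R.simple,
      (2 * (R.coeff γ α : ℝ) + c₁ α + c₂ α) • α := by
    have h0 : ∑ α ∈ R.simple, (2 * (R.coeff γ α : ℝ) + c₁ α + c₂ α) • α
        = ((∑ α ∈ R.simple, (R.coeff γ α : ℝ) • α)
          + (∑ α ∈ R.simple, (R.coeff γ α : ℝ) • α))
          + (∑ α ∈ R.simple, (c₁ α : ℝ) • α) + (∑ α ∈ R.simple, (c₂ α : ℝ) • α) := by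
      rw [← Finset.sum_add_distrib, ← Finset.sum_add_distrib, ← Finset.sum_add_distrib]
      apply Finset.sum_congr rfl
      intro α _
      rw [← add_smul, ← add_smul, ← add_smul]
      congr 1
      ring
    rw [h0, ← hγspec, ← hc₁, ← hc₂]
    abel
  have key : ν₁ + ν₂ ∈ R.pos := by
    by_contra hkey
    have h := hsum hkey
    have hspec := R.coeff_spec _ h
    have hne := R.root_ne _ h
    have h0 : (0 : V) = ∑ α ∈ R.simple,
        ((R.coeff (-(ν₁ + ν₂)) α : ℝ) + (2 * (R.coeff γ α : ℝ) + c₁ α + c₂ α)) • α := by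
      have h1 : ∑ α ∈ R.simple,
          ((R.coeff (-(ν₁ + ν₂)) α : ℝ) + (2 * (R.coeff γ α : ℝ) + c₁ α + c₂ α)) • α
          = (∑ α ∈ R.simple, (R.coeff (-(ν₁ + ν₂)) α : ℝ) • α)
            + ∑ α ∈ R.simple, (2 * (R.coeff γ α : ℝ) + c₁ α + c₂ α) • α := by
        rw [← Finset.sum_add_distrib]
        apply Finset.sum_congr rfl
        intro α _
        rw [add_smul]
      rw [h1, ← hspec, ← key2]
      abel
    have hz := coeff_eq_of_sum_eq R (fun _ => (0 : ℝ)) _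
      (by rw [← h0]; simp)
    apply hne
    rw [hspec]
    apply Finset.sum_eq_zero
    intro α hα
    have h1 := hz α hα
    have hnn : (0:ℝ) ≤ (R.coeff (-(ν₁ + ν₂)) α : ℝ) := Nat.cast_nonneg _
    have hnn1 : (0:ℝ) ≤ (R.coeff γ α : ℝ) := Nat.cast_nonneg _
    have hnn2 : (0:ℝ) ≤ (c₁ α : ℝ) := Nat.cast_nonneg _
    have hnn3 : (0:ℝ) ≤ (c₂ α : ℝ) := Nat.cast_nonneg _
    have h2 : (R.coeff (-(ν₁ + ν₂)) α : ℝ) = 0 := by linarith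
    rw [h2, zero_smul]
  obtain ⟨d, hd⟩ := R.highest_spec _ key
  have hθspec := R.coeff_spec R.highest R.highest_mem
  have hθ2 : R.highest = ∑ α ∈ R.simple,
      (2 * (R.coeff γ α : ℝ) + c₁ α + c₂ α + d α) • α := by
    have h0 : ∑ α ∈ R.simple, (2 * (R.coeff γ α : ℝ) + c₁ α + c₂ α + d α) • α
        = (∑ α ∈ R.simple, (2 * (R.coeff γ α : ℝ) + c₁ α + c₂ α) • α)
          + ∑ α ∈ R.simple, (d α : ℝ) • α := by
      rw [← Finset.sum_add_distrib]
      apply Finset.sum_congr rfl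
      intro α _
      rw [add_smul]
    rw [h0, ← key2, ← hd]
    abel
  have hθc := coeff_eq_of_sum_eq R _ _ (hθspec.symm.trans hθ2)
  intro α hα
  have h1 := hθc α hα
  rw [Nat.le_div_iff_mul_le (by norm_num)]
  have hnn2 : (0:ℝ) ≤ (c₁ α : ℝ) := Nat.cast_nonneg _
  have hnn3 : (0:ℝ) ≤ (c₂ α : ℝ) := Nat.cast_nonneg _
  have hnn4 : (0:ℝ) ≤ (d α : ℝ) := Nat.cast_nonneg _
  have : (R.coeff γ α : ℝ) * 2 ≤ (R.coeff R.highest α : ℝ) := by linarith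
  exact_mod_cast this
end

section
/- If Δ is of type A_n, then every positive root is commutative, i.e., for every γ ∈ Δ⁺ the upper ideal {ν ∈ Δ⁺ : ν ≽ γ} contains no two elements (not necessarily distinct) whose sum is a root. -/
open scoped RealInnerProductSpace

/-- the standard basis vector `ε i` of `ℝ^{n+1}` -/
noncomputable def eps {n : ℕ} (i : Fin (n + 1)) : EuclideanSpace ℝ (Fin (n + 1)) :=
  EuclideanSpace.single i (1 : ℝ)

/-- the positive roots of type `A_n`: `ε_i − ε_j` for `i < j` -/
def Apos (n : ℕ) : Set (EuclideanSpace ℝ (Fin (n + 1))) :=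
  {v | ∃ i j : Fin (n + 1), i < j ∧ v = eps i - eps j}

/-- the root order of type `A_n`: `μ ≼ ν` iff `ν − μ` is a nonnegative integral
combination of the simple roots `α_i = ε_i − ε_{i+1}` -/
def Arle (n : ℕ) (μ ν : EuclideanSpace ℝ (Fin (n + 1))) : Prop :=
  ∃ c : Fin n → ℕ, ν - μ = ∑ i : Fin n, (c i : ℝ) • (eps i.castSucc - eps i.succ)

/-- the linear functional summing the first coordinates (up to index `k`) -/
noncomputable def Lfun (n : ℕ) (k : Fin (n + 1)) :
    EuclideanSpace ℝ (Fin (n + 1)) →ₗ[ℝ] ℝ where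
  toFun v := ∑ m : Fin (n + 1), if m ≤ k then v m else 0
  map_add' x y := by
    simp only [PiLp.add_apply]
    rw [← Finset.sum_add_distrib]
    exact Finset.sum_congr rfl fun m _ => by split <;> ring
  map_smul' c x := by
    simp only [PiLp.smul_apply, smul_eq_mul, RingHom.id_apply]
    rw [Finset.mul_sum]
    exact Finset.sum_congr rfl fun m _ => by split <;> ring

lemma Lfun_eps (n : ℕ) (k p : Fin (n + 1)) :
    Lfun n k (eps p) = if p ≤ k then 1 else 0 := by
  have h : ∀ m : Fin (n + 1),
      (if m ≤ k then (eps p) m else 0) =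
        if m = p then (if p ≤ k then (1 : ℝ) else 0) else 0 := by
    intro m
    by_cases h1 : m = p
    · subst h1; simp [eps, EuclideanSpace.single_apply]
    · simp [eps, EuclideanSpace.single_apply, h1]
  simp only [Lfun, LinearMap.coe_mk, AddHom.coe_mk]
  rw [Finset.sum_congr rfl fun m _ => h m]
  simp

/-- key lemma: if `ε_i − ε_j ≽ ε_a − ε_b` then `i ≤ a` and `b ≤ j`. -/
lemma arle_bounds {n : ℕ} {a b i j : Fin (n + 1)} (hab : a < b) (hij : i < j)
    (h : Arle n (eps a - eps b) (eps i - eps j)) : i ≤ a ∧ b ≤ j := by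
  obtain ⟨c, hc⟩ := h
  have hS : ∀ k : Fin (n + 1),
      (0 : ℝ) ≤ (if i ≤ k then (1:ℝ) else 0) - (if j ≤ k then 1 else 0)
        - ((if a ≤ k then 1 else 0) - (if b ≤ k then 1 else 0)) := by
    intro k
    have h2 := congrArg (Lfun n k) hc
    rw [map_sub, map_sub, map_sub, map_sum] at h2
    simp only [Lfun_eps, map_smul, map_sub, smul_eq_mul] at h2
    rw [h2]
    apply Finset.sum_nonneg
    intro m _
    have hle : m.castSucc ≤ m.succ := (Fin.castSucc_lt_succ (i := m)).le
    by_cases h1 : m.succ ≤ k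
    · simp [h1, le_trans hle h1]
    · by_cases h0 : m.castSucc ≤ k <;> simp [h0, h1]
  constructor
  · by_contra hia
    push_neg at hia
    have := hS a
    simp [not_le.mpr hia, not_le.mpr hab, le_refl] at this
    split_ifs at this <;> norm_num at this
  · by_contra hbj
    push_neg at hbj
    have := hS (max a j)
    have h1 : i ≤ max a j := le_trans hij.le (le_max_right a j)
    have h2 : j ≤ max a j := le_max_right a j
    have h3 : a ≤ max a j := le_max_left a j
    have h4 : ¬ b ≤ max a j := by
      simp only [not_le, max_lt_iff]
      exact ⟨hab, hbj⟩
    simp [h1, h2, h3, h4] at this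
    norm_num at this

/-- in type `A_n`, every positive root `γ` is commutative: no two
elements of the upper ideal `{ν ∈ Δ⁺ : ν ≽ γ}` (not necessarily distinct) sum to
a root. -/
theorem stmt12 (n : ℕ) (γ : EuclideanSpace ℝ (Fin (n + 1))) (hγ : γ ∈ Apos n)
    (ν₁ ν₂ : EuclideanSpace ℝ (Fin (n + 1)))
    (h1 : ν₁ ∈ Apos n) (h2 : ν₂ ∈ Apos n)
    (hg1 : Arle n γ ν₁) (hg2 : Arle n γ ν₂) :
    ν₁ + ν₂ ∉ Apos n ∧ -(ν₁ + ν₂) ∉ Apos n := by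
  obtain ⟨a, b, hab, rfl⟩ := hγ
  obtain ⟨i₁, j₁, hij1, rfl⟩ := h1
  obtain ⟨i₂, j₂, hij2, rfl⟩ := h2
  obtain ⟨hi1, hb1⟩ := arle_bounds hab hij1 hg1
  obtain ⟨hi2, hb2⟩ := arle_bounds hab hij2 hg2
  have hj1 : ¬ j₁ ≤ a := not_le.mpr (lt_of_lt_of_le hab hb1)
  have hj2 : ¬ j₂ ≤ a := not_le.mpr (lt_of_lt_of_le hab hb2)
  constructor
  · rintro ⟨p, q, hpq, heq⟩
    have h2 := congrArg (Lfun n a) heq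
    rw [map_add, map_sub, map_sub, map_sub] at h2
    simp only [Lfun_eps] at h2
    simp [hi1, hi2, hj1, hj2] at h2
    split_ifs at h2 <;> norm_num at h2
  · rintro ⟨p, q, hpq, heq⟩
    have h2 := congrArg (Lfun n a) heq
    rw [map_neg, map_add, map_sub, map_sub, map_sub] at h2
    simp only [Lfun_eps] at h2
    simp [hi1, hi2, hj1, hj2] at h2
    split_ifs at h2 <;> norm_num at h2
end

section
/- Let Δ be a simple root system with highest root θ, H = {γ ∈ Δ⁺ : (γ,θ) > 0}. For each η ∈ H \ {θ}, the element θ − η is again a root, it lies in H \ {θ}, and it is the unique root ν ∈ H \ {θ} such that η + ν is a root. -/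
open scoped RealInnerProductSpace

namespace SimpleRS

variable {V : Type*} [NormedAddCommGroup V] [InnerProductSpace ℝ V] (R : SimpleRS V)

lemma coeff_zero' (f : V → ℝ) (h : ∑ α ∈ R.simple, f α • α = 0) :
    ∀ α ∈ R.simple, f α = 0 := by
  intro α hα
  have h' : ∑ a ∈ R.simple.attach, f (a : V) • (a : V) = 0 := by
    rw [Finset.sum_attach R.simple (fun x => f x • x)]; exact h
  exact linearIndependent_iff'.mp R.indep R.simple.attach (fun a => f (a : V)) h'
    ⟨α, hα⟩ (Finset.mem_attach _ _)

lemma combo2 (a b : V → ℕ)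
    (h : (∑ α ∈ R.simple, (a α : ℝ) • α) + (∑ α ∈ R.simple, (b α : ℝ) • α) = 0) :
    (∑ α ∈ R.simple, (a α : ℝ) • α) = 0 ∧ (∑ α ∈ R.simple, (b α : ℝ) • α) = 0 := by
  have hsum : ∑ α ∈ R.simple, ((a α : ℝ) + (b α : ℝ)) • α = 0 := by
    rw [← h, ← Finset.sum_add_distrib]
    exact Finset.sum_congr rfl fun α _ => by rw [add_smul]
  have hz := R.coeff_zero' (fun x => (a x : ℝ) + (b x : ℝ)) hsum
  constructor <;> refine Finset.sum_eq_zero fun α hα => ?_ <;>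
  · have h1 : (a α : ℝ) + (b α : ℝ) = 0 := hz α hα
    have h2 : (a α : ℝ) = 0 ∧ (b α : ℝ) = 0 := by
      constructor <;> nlinarith [Nat.cast_nonneg (α := ℝ) (a α), Nat.cast_nonneg (α := ℝ) (b α)]
    simp [h2.1, h2.2]

end SimpleRS
namespace SimpleRS

variable {V : Type*} [NormedAddCommGroup V] [InnerProductSpace ℝ V] (R : SimpleRS V)

lemma ipos' {x : V} (hx : x ≠ 0) : 0 < ⟪x, x⟫ :=
  lt_of_le_of_ne real_inner_self_nonneg
    (Ne.symm ((inner_self_ne_zero (𝕜 := ℝ)).mpr hx))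

lemma theta_pos : 0 < ⟪R.highest, R.highest⟫ := ipos' (R.root_ne _ R.highest_mem)

lemma combo_alpha (z : ℝ) (α : V) (hα : α ∈ R.simple) (c : V → ℕ)
    (h : z • α = ∑ β ∈ R.simple, (c β : ℝ) • β) : z = c α := by
  classical
  have hsum : ∑ β ∈ R.simple, ((c β : ℝ) - (if β = α then z else 0)) • β = 0 := by
    simp only [sub_smul, ite_smul, zero_smul, Finset.sum_sub_distrib]
    rw [Finset.sum_ite_eq' R.simple α (fun β => z • β), if_pos hα, ← h, sub_self]
  have h0 := R.coeff_zero' _ hsum α hα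
  norm_num at h0
  linarith

lemma dominant : ∀ α ∈ R.simple, 0 ≤ ⟪R.highest, α⟫ := by
  intro α hα
  by_contra hneg
  push_neg at hneg
  have hαp := R.simple_sub hα
  have hα0 : 0 < ⟪α, α⟫ := ipos' (R.root_ne _ hαp)
  obtain ⟨z, hz⟩ := R.crystallographic α hαp R.highest R.highest_mem
  have hzneg : (z : ℝ) < 0 := by
    rw [← hz]; exact div_neg_of_neg_of_pos (by linarith) hα0
  rcases R.reflect_mem α hαp R.highest R.highest_mem with hmem | hmem
  · rw [hz] at hmem
    obtain ⟨c, hc⟩ := R.highest_spec _ hmem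
    have hc' : (z : ℝ) • α = ∑ β ∈ R.simple, (c β : ℝ) • β := by rw [← hc]; abel
    have h1 := R.combo_alpha _ α hα c hc'
    have : (0:ℝ) ≤ z := h1 ▸ Nat.cast_nonneg _
    linarith
  · rw [hz, neg_sub] at hmem
    have ht := R.coeff_spec _ R.highest_mem
    have hd := R.coeff_spec _ hmem
    have hc' : (z : ℝ) • α =
        ∑ β ∈ R.simple, ((fun x => R.coeff ((z:ℝ) • α - R.highest) x + R.coeff R.highest x) β : ℝ) • β := by
      push_cast
      simp only [add_smul, Finset.sum_add_distrib]
      rw [← hd, ← ht]; abel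
    have h1 := R.combo_alpha _ α hα _ hc'
    have : (0:ℝ) ≤ z := h1 ▸ Nat.cast_nonneg _
    linarith

lemma combo_inner_nonneg (c : V → ℕ) :
    0 ≤ ⟪∑ α ∈ R.simple, (c α : ℝ) • α, R.highest⟫ := by
  rw [sum_inner]
  refine Finset.sum_nonneg fun α hα => ?_
  rw [real_inner_smul_left]
  exact mul_nonneg (Nat.cast_nonneg _)
    (by rw [real_inner_comm]; exact R.dominant α hα)

lemma inner_nonneg : ∀ γ ∈ R.pos, 0 ≤ ⟪γ, R.highest⟫ := fun γ hγ => by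
  rw [R.coeff_spec γ hγ]; exact R.combo_inner_nonneg _

lemma inner_le : ∀ γ ∈ R.pos, ⟪γ, R.highest⟫ ≤ ⟪R.highest, R.highest⟫ := by
  intro γ hγ
  obtain ⟨c, hc⟩ := R.highest_spec γ hγ
  have h := R.combo_inner_nonneg c
  rw [← hc, inner_sub_left] at h
  linarith

lemma cartan_one {γ : V} (hγ : γ ∈ R.pos) (hpos : 0 < ⟪γ, R.highest⟫)
    (hne : γ ≠ R.highest) :
    2 * ⟪γ, R.highest⟫ / ⟪R.highest, R.highest⟫ = 1 := by
  obtain ⟨z, hz⟩ := R.crystallographic R.highest R.highest_mem γ hγ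
  have hθθ := R.theta_pos
  have hz1 : (0 : ℝ) < z := by rw [← hz]; positivity
  have hz2 : (z : ℝ) ≤ 2 := by
    rw [← hz, div_le_iff₀ hθθ]
    have := R.inner_le γ hγ; linarith
  have hz1' : (1 : ℤ) ≤ z := by exact_mod_cast hz1
  have hz2' : z ≤ 2 := by exact_mod_cast hz2
  have hz12 : z = 1 ∨ z = 2 := by omega
  rcases hz12 with h1 | h2
  · rw [hz, h1, Int.cast_one]
  · exfalso
    rw [h2] at hz
    push_cast at hz
    rcases R.reflect_mem R.highest R.highest_mem γ hγ with hmem | hmem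
    · rw [hz] at hmem
      have hd := R.coeff_spec _ hmem
      obtain ⟨c, hc⟩ := R.highest_spec γ hγ
      have ht := R.coeff_spec _ R.highest_mem
      have hzero : (∑ β ∈ R.simple,
            ((fun x => R.coeff (γ - (2:ℝ) • R.highest) x + c x) β : ℝ) • β) +
          (∑ β ∈ R.simple, ((R.coeff R.highest β : ℝ)) • β) = 0 := by
        push_cast
        simp only [add_smul, Finset.sum_add_distrib]
        rw [← hd, ← hc, ← ht]
        module
      have h0 := (R.combo2 _ _ hzero).2
      rw [← ht] at h0
      exact R.root_ne _ R.highest_mem h0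
    · rw [hz, neg_sub] at hmem
      obtain ⟨c', hc'⟩ := R.highest_spec _ hmem
      obtain ⟨c, hc⟩ := R.highest_spec γ hγ
      have hzero : (∑ β ∈ R.simple, (c' β : ℝ) • β) +
          (∑ β ∈ R.simple, (c β : ℝ) • β) = 0 := by
        rw [← hc', ← hc]
        module
      have h0 := (R.combo2 _ _ hzero).2
      rw [← hc, sub_eq_zero] at h0
      exact hne h0.symm

lemma sub_mem {η : V} (hηp : η ∈ R.pos) (hηθ : 0 < ⟪η, R.highest⟫)
    (hηne : η ≠ R.highest) : R.highest - η ∈ R.pos := by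
  have hc1 := R.cartan_one hηp hηθ hηne
  rcases R.reflect_mem R.highest R.highest_mem η hηp with hmem | hmem
  · exfalso
    rw [hc1, one_smul] at hmem
    have hd := R.coeff_spec _ hmem
    obtain ⟨c, hc⟩ := R.highest_spec η hηp
    have hzero : (∑ β ∈ R.simple, ((R.coeff (η - R.highest) β : ℝ)) • β) +
        (∑ β ∈ R.simple, (c β : ℝ) • β) = 0 := by
      rw [← hd, ← hc]; abel
    have h0 := (R.combo2 _ _ hzero).2
    rw [← hc, sub_eq_zero] at h0
    exact hηne h0.symm
  · rw [hc1, one_smul, neg_sub] at hmem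
    exact hmem

end SimpleRS
/-- for each `η ∈ H \ {θ}`, the element `θ − η` is a root lying in
`H \ {θ}`, and it is the unique `ν ∈ H \ {θ}` such that `η + ν` is a root. -/
theorem stmt14 {V : Type*} [NormedAddCommGroup V] [InnerProductSpace ℝ V]
    (R : SimpleRS V) {η : V}
    (hη : η ∈ R.pos ∧ 0 < ⟪η, R.highest⟫ ∧ η ≠ R.highest) :
    (R.highest - η ∈ R.pos ∧ 0 < ⟪R.highest - η, R.highest⟫ ∧
      R.highest - η ≠ R.highest) ∧
    (η + (R.highest - η) ∈ R.pos ∨ -(η + (R.highest - η)) ∈ R.pos) ∧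
    (∀ ν : V, (ν ∈ R.pos ∧ 0 < ⟪ν, R.highest⟫ ∧ ν ≠ R.highest) →
      (η + ν ∈ R.pos ∨ -(η + ν) ∈ R.pos) → ν = R.highest - η) := by
  obtain ⟨hηp, hηθ, hηne⟩ := hη
  have hθθ := R.theta_pos
  have hc1 := R.cartan_one hηp hηθ hηne
  have hinner : ⟪η, R.highest⟫ = ⟪R.highest, R.highest⟫ / 2 := by
    rw [div_eq_one_iff_eq hθθ.ne'] at hc1
    linarith
  have hsub : R.highest - η ∈ R.pos := R.sub_mem hηp hηθ hηne
  refine ⟨⟨hsub, ?_, ?_⟩, Or.inl ?_, ?_⟩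
  · rw [inner_sub_left]; linarith
  · intro h
    exact R.root_ne η hηp (sub_eq_self.mp h)
  · have : η + (R.highest - η) = R.highest := by abel
    rw [this]; exact R.highest_mem
  · rintro ν ⟨hνp, hνθ, hνne⟩ hroot
    have hcν := R.cartan_one hνp hνθ hνne
    have hinnerν : ⟪ν, R.highest⟫ = ⟪R.highest, R.highest⟫ / 2 := by
      rw [div_eq_one_iff_eq hθθ.ne'] at hcν
      linarith
    rcases hroot with h | h
    · by_cases he : η + ν = R.highest
      · rw [← he]; abel
      · have hc2 := R.cartan_one h (by rw [inner_add_left]; linarith) he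
        rw [inner_add_left, hinner, hinnerν, div_eq_one_iff_eq hθθ.ne'] at hc2
        linarith
    · exfalso
      have h0 := R.inner_nonneg _ h
      rw [inner_neg_left, inner_add_left] at h0
      linarith
end
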